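/- Fix integers e ≥ 2 and k with 0 ≤ k ≤ e−1. Then the linear map Θ intertwines the lowering operators of the embedding of affine sl_e into affine sl_{e+1}: (i) Θ ∘ F_r^{(e)} = F_r^{(e+1)} ∘ Θ for each r ∈ {0,…,k−1}; (ii) Θ ∘ F_k^{(e)} = (F_{k+1}^{(e+1)} ∘ F_k^{(e+1)} − F_k^{(e+1)} ∘ F_{k+1}^{(e+1)}) ∘ Θ; (iii) Θ ∘ F_r^{(e)} = F_{r+1}^{(e+1)} ∘ Θ for each r ∈ {k+1,…,e−1} (indices for the operators F^{(e)} are taken in ℤ/eℤ and for F^{(e+1)} in ℤ/(e+1)ℤ). -/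
import Mathlib


/-- The map `Υ : ℤ → ℤ` defined by `Υ(a·e + b) = a·(e+1) + b` if `0 ≤ b ≤ k` and
`Υ(a·e + b) = a·(e+1) + b + 1` if `k+1 ≤ b ≤ e−1`, where `b` is the residue modulo `e`. -/
def Ups (e k a : ℤ) : ℤ :=
  if a % e ≤ k then a / e * (e + 1) + a % e else a / e * (e + 1) + a % e + 1


lemma emod_helper (E q b : ℤ) (hE : 0 < E) (hb : 0 ≤ b) (hbe : b < E) :
    (E * q + b) % E = b ∧ (E * q + b) / E = q := by
  constructor
  · rw [add_comm, Int.add_mul_emod_self_left, Int.emod_eq_of_lt hb hbe]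
  · rw [add_comm, Int.add_mul_ediv_left _ _ hE.ne', Int.ediv_eq_zero_of_lt hb hbe, zero_add]

lemma emod_succ {M s c : ℤ} (hM : 0 < M) (h : s % M = c) (hc : c + 1 < M) :
    (s + 1) % M = c + 1 := by
  have h0 : 0 ≤ c := h ▸ Int.emod_nonneg s hM.ne'
  have key : s + 1 = M * (s / M) + (c + 1) := by
    have := Int.mul_ediv_add_emod s M
    rw [h] at this
    linarith
  rw [key, (emod_helper M (s/M) (c+1) hM (by linarith) hc).1]

lemma Ups_emod (e k : ℕ) (he : 2 ≤ e) (hk : (k:ℤ) ≤ (e:ℤ) - 1) (r : ℤ) :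
    Ups e k r % ((e:ℤ)+1) = if r % (e:ℤ) ≤ (k:ℤ) then r % (e:ℤ) else r % (e:ℤ) + 1 := by
  have hE : (0:ℤ) < e := by positivity
  have hb0 : 0 ≤ r % (e:ℤ) := Int.emod_nonneg r hE.ne'
  have hbe : r % (e:ℤ) < e := Int.emod_lt_of_pos r hE
  unfold Ups
  split_ifs with h
  · rw [show r / (e:ℤ) * ((e:ℤ)+1) + r % (e:ℤ) = ((e:ℤ)+1) * (r / (e:ℤ)) + r % (e:ℤ) by ring]
    exact (emod_helper _ _ _ (by linarith) hb0 (by linarith)).1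
  · rw [show r / (e:ℤ) * ((e:ℤ)+1) + r % (e:ℤ) + 1 = ((e:ℤ)+1) * (r / (e:ℤ)) + (r % (e:ℤ) + 1) by ring]
    exact (emod_helper _ _ _ (by linarith) (by linarith) (by linarith)).1

lemma Ups_succ (e k : ℕ) (he : 2 ≤ e) (hk : (k:ℤ) ≤ (e:ℤ) - 1) (r : ℤ) :
    Ups e k (r+1) = if r % (e:ℤ) = (k:ℤ) then Ups e k r + 2 else Ups e k r + 1 := by
  have hE : (0:ℤ) < e := by positivity
  have hk0 : (0:ℤ) ≤ k := Int.natCast_nonneg k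
  have hb0 : 0 ≤ r % (e:ℤ) := Int.emod_nonneg r hE.ne'
  have hbe : r % (e:ℤ) < e := Int.emod_lt_of_pos r hE
  have hr : (e:ℤ) * (r / e) + r % e = r := Int.mul_ediv_add_emod r e
  by_cases hlast : r % (e:ℤ) = (e:ℤ) - 1
  · have hr1 : r + 1 = (e:ℤ) * (r / e + 1) + 0 := by rw [mul_add, mul_one, add_zero]; linarith
    have hm := emod_helper (e:ℤ) (r / e + 1) 0 hE le_rfl hE
    have hmod : (r+1) % (e:ℤ) = 0 := by rw [hr1]; exact hm.1
    have hdiv : (r+1) / (e:ℤ) = r / e + 1 := by rw [hr1]; exact hm.2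
    simp only [Ups, hmod, hdiv]
    rw [if_pos hk0]
    split_ifs with h1 h2 h2
    · linear_combination (-1 : ℤ) * hlast
    · exact absurd (le_of_eq h1) h2
    · exact absurd (by linarith : r % (e:ℤ) = (k:ℤ)) h1
    · linear_combination (-1 : ℤ) * hlast
  · have hr1 : r + 1 = (e:ℤ) * (r / e) + (r % e + 1) := by linarith
    have hm := emod_helper (e:ℤ) (r / e) (r % e + 1) hE (by linarith) (by omega)
    have hmod : (r+1) % (e:ℤ) = r % e + 1 := by rw [hr1]; exact hm.1
    have hdiv : (r+1) / (e:ℤ) = r / e := by rw [hr1]; exact hm.2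
    simp only [Ups, hmod, hdiv]
    split_ifs with h1 h2 h3 <;> first | linarith | omega

/-- The operator `F_i^{(m)}` on `U = ⊕_{r ∈ ℤ} ℂ·u_r`: `F_i^{(m)}(u_r) = u_{r+1}` if
`r ≡ i (mod m)` and `0` otherwise. -/
noncomputable def Fop (m : ℕ) (i : ZMod m) : (ℤ →₀ ℂ) →ₗ[ℂ] (ℤ →₀ ℂ) :=
  Finsupp.lsum ℂ fun r : ℤ =>
    if ((r : ZMod m) = i) then Finsupp.lsingle (r + 1) else 0

/-- The `ℂ`-linear map `Θ : U → U` with `Θ(u_r) = u_{Υ(r)}`. -/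
noncomputable def Theta (e k : ℕ) : (ℤ →₀ ℂ) →ₗ[ℂ] (ℤ →₀ ℂ) :=
  Finsupp.lmapDomain ℂ ℂ fun r : ℤ => Ups (e : ℤ) (k : ℤ) r


lemma Fop_single (m : ℕ) (i : ZMod m) (r : ℤ) (c : ℂ) :
    Fop m i (Finsupp.single r c) =
      if ((r : ZMod m) = i) then Finsupp.single (r+1) c else 0 := by
  rw [Fop, Finsupp.lsum_single]
  split_ifs <;> simp

lemma Theta_single (e k : ℕ) (r : ℤ) (c : ℂ) :
    Theta e k (Finsupp.single r c) = Finsupp.single (Ups e k r) c := by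
  rw [Theta, Finsupp.lmapDomain_apply, Finsupp.mapDomain_single]

lemma zmod_int (m : ℕ) (r : ℤ) (t : ℕ) (ht : t < m) :
    ((r : ZMod m) = ((t:ℕ) : ZMod m)) ↔ r % (m:ℤ) = t := by
  have h : ((t : ℕ) : ZMod m) = ((t : ℤ) : ZMod m) := by push_cast; rfl
  rw [h, ZMod.intCast_eq_intCast_iff, Int.ModEq,
    Int.emod_eq_of_lt (Int.natCast_nonneg t) (by exact_mod_cast ht)]

/-- `Θ` intertwines the lowering operators of the embedding `sl̃_e ⊆ sl̃_{e+1}`. -/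
theorem stmt5 (e k : ℕ) (he : 2 ≤ e) (hk : k ≤ e - 1) :
    (∀ r : ℕ, r < k →
      Theta e k ∘ₗ Fop e ((r : ℕ) : ZMod e) =
        Fop (e + 1) ((r : ℕ) : ZMod (e + 1)) ∘ₗ Theta e k) ∧
    (Theta e k ∘ₗ Fop e ((k : ℕ) : ZMod e) =
      (Fop (e + 1) (((k + 1 : ℕ)) : ZMod (e + 1)) ∘ₗ Fop (e + 1) ((k : ℕ) : ZMod (e + 1)) -
          Fop (e + 1) ((k : ℕ) : ZMod (e + 1)) ∘ₗ
            Fop (e + 1) (((k + 1 : ℕ)) : ZMod (e + 1))) ∘ₗ Theta e k) ∧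
    (∀ r : ℕ, k + 1 ≤ r → r ≤ e - 1 →
      Theta e k ∘ₗ Fop e ((r : ℕ) : ZMod e) =
        Fop (e + 1) (((r + 1 : ℕ)) : ZMod (e + 1)) ∘ₗ Theta e k) := by
  have hkE : (k:ℤ) ≤ (e:ℤ) - 1 := by omega
  have hE : (0:ℤ) < e := by positivity
  refine ⟨fun t ht => ?_, ?_, fun t ht1 ht2 => ?_⟩
  · refine Finsupp.lhom_ext fun r c => ?_
    have hb0 : 0 ≤ r % (e:ℤ) := Int.emod_nonneg r hE.ne'
    have hbe : r % (e:ℤ) < e := Int.emod_lt_of_pos r hE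
    simp only [LinearMap.coe_comp, Function.comp_apply, Fop_single, Theta_single,
      apply_ite (Theta e k), map_zero]
    rw [Ups_succ e k he hkE r]
    simp only [zmod_int e r t (by omega), zmod_int (e+1) (Ups e k r) t (by omega)]
    push_cast
    rw [Ups_emod e k he hkE r]
    set b := r % (e:ℤ) with hb
    by_cases hc : b = (t:ℤ)
    · rw [if_pos hc, if_neg (show b ≠ (k:ℤ) by omega),
        if_pos (show (if b ≤ (k:ℤ) then b else b+1) = (t:ℤ) by
          rw [if_pos (show b ≤ (k:ℤ) by omega)]; exact hc)]
    · rw [if_neg hc, if_neg (show ¬ (if b ≤ (k:ℤ) then b else b+1) = (t:ℤ) by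
        split_ifs <;> omega)]
  · refine Finsupp.lhom_ext fun r c => ?_
    have hb0 : 0 ≤ r % (e:ℤ) := Int.emod_nonneg r hE.ne'
    have hbe : r % (e:ℤ) < e := Int.emod_lt_of_pos r hE
    simp only [LinearMap.coe_comp, Function.comp_apply, LinearMap.sub_apply, Fop_single,
      Theta_single, apply_ite (Theta e k), apply_ite (Fop (e+1) (((k + 1 : ℕ)) : ZMod (e + 1))),
      apply_ite (Fop (e+1) ((k : ℕ) : ZMod (e + 1))), map_zero]
    rw [Ups_succ e k he hkE r]
    simp only [zmod_int e r k (by omega), zmod_int (e+1) (Ups e k r) k (by omega),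
      zmod_int (e+1) (Ups e k r + 1) (k+1) (by omega), zmod_int (e+1) (Ups e k r) (k+1) (by omega)]
    push_cast
    rw [Ups_emod e k he hkE r]
    set b := r % (e:ℤ) with hb
    by_cases hc : b = (k:ℤ)
    · have hs : (if b ≤ (k:ℤ) then b else b+1) = (k:ℤ) := by rw [if_pos (le_of_eq hc)]; exact hc
      have hs1 : (Ups e k r + 1) % ((e:ℤ)+1) = (k:ℤ) + 1 := by
        refine emod_succ (by linarith) ?_ (by omega)
        rw [Ups_emod e k he hkE r, ← hb]; exact hs
      rw [if_pos hc, if_pos hc, hs1, if_pos hs, if_pos rfl,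
        if_neg (show ¬ (if b ≤ (k:ℤ) then b else b+1) = (k:ℤ)+1 by split_ifs <;> omega)]
      rw [sub_zero, show Ups e k r + 2 = Ups e k r + 1 + 1 by ring]
    · rw [if_neg hc,
        if_neg (show ¬ (if b ≤ (k:ℤ) then b else b+1) = (k:ℤ) by split_ifs <;> omega),
        if_neg (show ¬ (if b ≤ (k:ℤ) then b else b+1) = (k:ℤ)+1 by split_ifs <;> omega)]
      simp
  · refine Finsupp.lhom_ext fun r c => ?_
    have hb0 : 0 ≤ r % (e:ℤ) := Int.emod_nonneg r hE.ne'
    have hbe : r % (e:ℤ) < e := Int.emod_lt_of_pos r hE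
    simp only [LinearMap.coe_comp, Function.comp_apply, Fop_single, Theta_single,
      apply_ite (Theta e k), map_zero]
    rw [Ups_succ e k he hkE r]
    simp only [zmod_int e r t (by omega), zmod_int (e+1) (Ups e k r) (t+1) (by omega)]
    push_cast
    rw [Ups_emod e k he hkE r]
    set b := r % (e:ℤ) with hb
    by_cases hc : b = (t:ℤ)
    · rw [if_pos hc, if_neg (show b ≠ (k:ℤ) by omega),
        if_pos (show (if b ≤ (k:ℤ) then b else b+1) = (t:ℤ)+1 by
          rw [if_neg (show ¬ b ≤ (k:ℤ) by omega)]; omega)]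
    · rw [if_neg hc, if_neg (show ¬ (if b ≤ (k:ℤ) then b else b+1) = (t:ℤ)+1 by
        split_ifs <;> omega)]
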